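/- Let A and B be finite multisets of nonnegative integers with n = A(1)·B(1) = (#A)(#B). Then A(x)·B(x) ≡ 1 + x + ⋯ + x^{n−1} (mod x^n − 1) if and only if n = A(1)·B(1) and for every divisor t > 1 of n, the cyclotomic polynomial Φ_t(x) divides A(x) or divides B(x). -/

import Mathlib

open Polynomial

/-- The polynomial of a finite multiset of nonnegative integers. -/
noncomputable def multisetPoly (A : Multiset ℕ) : Polynomial ℤ :=
  (A.map fun a => (X : Polynomial ℤ) ^ a).sum

lemma multisetPoly_eval_one (C : Multiset ℕ) :
    (multisetPoly C).eval 1 = Multiset.card C := by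
  rw [multisetPoly, ← Polynomial.coe_evalRingHom, map_multiset_sum, Multiset.map_map]
  simp

lemma prod_primes_dvd_of_dvd {s : Finset ℕ} {f : ℕ → Polynomial ℤ} {D : Polynomial ℤ}
    (hp : ∀ i ∈ s, Prime (f i)) (hm : ∀ i ∈ s, (f i).Monic)
    (hinj : ∀ i ∈ s, ∀ j ∈ s, f i = f j → i = j)
    (hd : ∀ i ∈ s, f i ∣ D) : (∏ i ∈ s, f i) ∣ D := by
  classical
  induction s using Finset.induction_on generalizing D with
  | empty => simp
  | @insert a s ha ih =>
    rw [Finset.prod_insert ha]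
    obtain ⟨k, rfl⟩ := hd a (Finset.mem_insert_self a s)
    refine mul_dvd_mul_left _ (ih (fun i hi => hp i (Finset.mem_insert_of_mem hi))
      (fun i hi => hm i (Finset.mem_insert_of_mem hi))
      (fun i hi j hj => hinj i (Finset.mem_insert_of_mem hi) j (Finset.mem_insert_of_mem hj))
      (fun i hi => ?_))
    have hiD : f i ∣ f a * k := hd i (Finset.mem_insert_of_mem hi)
    have hpi := hp i (Finset.mem_insert_of_mem hi)
    refine (hpi.dvd_or_dvd hiD).resolve_left fun hfa => ?_
    have heq : f i = f a := Polynomial.eq_of_monic_of_associated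
      (hm i (Finset.mem_insert_of_mem hi)) (hm a (Finset.mem_insert_self a s))
      (hpi.associated_of_dvd (hp a (Finset.mem_insert_self a s)) hfa)
    obtain rfl : i = a := hinj i (Finset.mem_insert_of_mem hi) a (Finset.mem_insert_self a s) heq
    exact ha hi

theorem poly_congr_iff_cyclotomic_divisors (A B : Multiset ℕ)
    (n : ℕ) (hn : n = Multiset.card A * Multiset.card B) :
    ((X ^ n - 1 : Polynomial ℤ) ∣
        (multisetPoly A * multisetPoly B - ∑ i ∈ Finset.range n, X ^ i)) ↔
      ((n : ℤ) = (multisetPoly A).eval 1 * (multisetPoly B).eval 1 ∧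
        ∀ t : ℕ, t ∣ n → 1 < t →
          cyclotomic t ℤ ∣ multisetPoly A ∨ cyclotomic t ℤ ∣ multisetPoly B) := by
  have hA1 := multisetPoly_eval_one A
  have hB1 := multisetPoly_eval_one B
  have hc1 : (n : ℤ) = (multisetPoly A).eval 1 * (multisetPoly B).eval 1 := by
    rw [hA1, hB1]; exact_mod_cast hn
  rcases Nat.eq_zero_or_pos n with h0 | hpos
  · subst h0
    have hP0 : multisetPoly A = 0 ∨ multisetPoly B = 0 := by
      rcases Nat.mul_eq_zero.mp hn.symm with h | h
      · left
        rw [Multiset.card_eq_zero.mp h]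
        simp [multisetPoly]
      · right
        rw [Multiset.card_eq_zero.mp h]
        simp [multisetPoly]
    constructor
    · intro _
      refine ⟨hc1, fun t _ _ => ?_⟩
      rcases hP0 with h | h
      · exact Or.inl (h ▸ dvd_zero _)
      · exact Or.inr (h ▸ dvd_zero _)
    · intro _
      rcases hP0 with h | h <;> simp [h]
  · have hdvd_geom : ∀ t : ℕ, t ∣ n → 1 < t →
        cyclotomic t ℤ ∣ ∑ i ∈ Finset.range n, X ^ i := by
      intro t ht h1t
      rw [← prod_cyclotomic_eq_geom_sum hpos ℤ]
      exact Finset.dvd_prod_of_mem _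
        (Finset.mem_erase.mpr ⟨h1t.ne', Nat.mem_divisors.mpr ⟨ht, hpos.ne'⟩⟩)
    constructor
    · intro hdiv
      refine ⟨hc1, fun t ht h1t => ?_⟩
      have hprime : Prime (cyclotomic t ℤ) :=
        UniqueFactorizationMonoid.irreducible_iff_prime.mp
          (cyclotomic.irreducible (lt_trans one_pos h1t))
      have hct : cyclotomic t ℤ ∣ X ^ n - 1 := by
        rw [← prod_cyclotomic_eq_X_pow_sub_one hpos ℤ]
        exact Finset.dvd_prod_of_mem _ (Nat.mem_divisors.mpr ⟨ht, hpos.ne'⟩)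
      have hAB : cyclotomic t ℤ ∣ multisetPoly A * multisetPoly B := by
        have h1 := hct.trans hdiv
        have h2 := hdvd_geom t ht h1t
        have h3 := dvd_add h1 h2
        simpa using h3
      exact hprime.2.2 _ _ hAB
    · rintro ⟨-, hcyc⟩
      have hroot : (multisetPoly A * multisetPoly B - ∑ i ∈ Finset.range n, X ^ i).eval 1 = 0 := by
        rw [eval_sub, eval_mul, hA1, hB1, eval_finset_sum]
        simp only [eval_pow, eval_X, one_pow, Finset.sum_const, Finset.card_range,
          nsmul_eq_mul, mul_one]
        rw [hn]; push_cast; ring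
      rw [← prod_cyclotomic_eq_X_pow_sub_one hpos ℤ]
      refine prod_primes_dvd_of_dvd
        (fun i hi => UniqueFactorizationMonoid.irreducible_iff_prime.mp
          (cyclotomic.irreducible (Nat.pos_of_mem_divisors hi)))
        (fun i _ => cyclotomic.monic i ℤ)
        (fun i _ j _ h => cyclotomic_injective h)
        (fun i hi => ?_)
      rcases eq_or_ne i 1 with rfl | hi1
      · rw [cyclotomic_one]
        have := (dvd_iff_isRoot (p := multisetPoly A * multisetPoly B -
          ∑ i ∈ Finset.range n, X ^ i) (a := (1 : ℤ))).mpr hroot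
        simpa using this
      · have h1i : 1 < i := lt_of_le_of_ne (Nat.pos_of_mem_divisors hi) (Ne.symm hi1)
        have hiP : cyclotomic i ℤ ∣ multisetPoly A * multisetPoly B := by
          rcases hcyc i (Nat.mem_divisors.mp hi).1 h1i with h | h
          · exact h.mul_right _
          · exact h.mul_left _
        exact dvd_sub hiP (hdvd_geom i (Nat.mem_divisors.mp hi).1 h1i)
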